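/- Let ζ = exp(πi/31) ∈ ℂ. Then [14]_ζ [18]_ζ [20]_ζ [22]_ζ [24]_ζ [25]_ζ [26]_ζ [30]_ζ [32]_ζ [34]_ζ = [1]_ζ² [3]_ζ [5]_ζ [6]_ζ [7]_ζ [9]_ζ [11]_ζ [13]_ζ [17]_ζ; equivalently, the quantum dimension of the representation V(Λ_7 + Λ_8) of the simple Lie algebra of type E₈ at ζ, namely ([14]_ζ [18]_ζ [20]_ζ [22]_ζ [24]_ζ [25]_ζ [26]_ζ [30]_ζ [32]_ζ [34]_ζ)/([1]_ζ² [3]_ζ [5]_ζ [6]_ζ [7]_ζ [9]_ζ [11]_ζ [13]_ζ [17]_ζ), equals 1. -/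

import Mathlib

open Complex

/-- `ζ = exp(πi/m)`, a primitive `2m`-th root of unity. -/
noncomputable def zeta (m : ℕ) : ℂ := Complex.exp (Real.pi * Complex.I / m)

/-- The `ζ`-integer `[n]_ζ = (ζ^n - ζ^{-n})/(ζ - ζ⁻¹)` for `ζ = exp(πi/m)`. -/
noncomputable def qint (m : ℕ) (n : ℤ) : ℂ :=
  (zeta m ^ n - zeta m ^ (-n)) / (zeta m - (zeta m)⁻¹)

set_option maxHeartbeats 1600000 in
theorem qdim_E8_Lambda7_Lambda8 :
    qint 31 14 * qint 31 18 * qint 31 20 * qint 31 22 * qint 31 24 * qint 31 25 *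
        qint 31 26 * qint 31 30 * qint 31 32 * qint 31 34 =
        qint 31 1 ^ 2 * qint 31 3 * qint 31 5 * qint 31 6 * qint 31 7 * qint 31 9 *
          qint 31 11 * qint 31 13 * qint 31 17 ∧
      qint 31 14 * qint 31 18 * qint 31 20 * qint 31 22 * qint 31 24 * qint 31 25 *
          qint 31 26 * qint 31 30 * qint 31 32 * qint 31 34 /
        (qint 31 1 ^ 2 * qint 31 3 * qint 31 5 * qint 31 6 * qint 31 7 * qint 31 9 *
          qint 31 11 * qint 31 13 * qint 31 17) = 1 := by
  have hz : IsPrimitiveRoot (zeta 31) 62 := by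
    have h := Complex.isPrimitiveRoot_exp 62 (by norm_num)
    have e : zeta 31 = Complex.exp (2 * Real.pi * Complex.I / (62:ℕ)) := by
      unfold zeta; congr 1; push_cast; ring
    rw [e]; exact h
  have hz0 : zeta 31 ≠ 0 := hz.ne_zero (by norm_num)
  have h2 : zeta 31 ^ 2 ≠ 1 := hz.pow_ne_one_of_pos_of_lt (by norm_num) (by norm_num)
  have hd : zeta 31 - (zeta 31)⁻¹ ≠ 0 := by
    intro h
    apply h2
    have h1 : zeta 31 * (zeta 31)⁻¹ = 1 := mul_inv_cancel₀ hz0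
    linear_combination zeta 31 * h + h1
  have h31 : zeta 31 ^ 31 = -1 := by
    unfold zeta
    rw [← Complex.exp_nat_mul, show ((31:ℕ):ℂ) * (Real.pi * Complex.I / ((31:ℕ):ℂ)) =
      Real.pi * Complex.I by push_cast; field_simp]
    exact Complex.exp_pi_mul_I
  have hne : zeta 31 + 1 ≠ 0 := by
    intro h
    exact h2 (by linear_combination (zeta 31 - 1) * h)
  have hPhi : (1:ℂ) + (-1:ℂ) * zeta 31 ^ 1 + (1:ℂ) * zeta 31 ^ 2 + (-1:ℂ) * zeta 31 ^ 3 + (1:ℂ) * zeta 31 ^ 4 + (-1:ℂ) * zeta 31 ^ 5 + (1:ℂ) * zeta 31 ^ 6 + (-1:ℂ) * zeta 31 ^ 7 + (1:ℂ) * zeta 31 ^ 8 + (-1:ℂ) * zeta 31 ^ 9 + (1:ℂ) * zeta 31 ^ 10 + (-1:ℂ) * zeta 31 ^ 11 + (1:ℂ) * zeta 31 ^ 12 + (-1:ℂ) * zeta 31 ^ 13 + (1:ℂ) * zeta 31 ^ 14 + (-1:ℂ) * zeta 31 ^ 15 + (1:ℂ) * zeta 31 ^ 16 + (-1:ℂ)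 * zeta 31 ^ 17 + (1:ℂ) * zeta 31 ^ 18 + (-1:ℂ) * zeta 31 ^ 19 + (1:ℂ) * zeta 31 ^ 20 + (-1:ℂ) * zeta 31 ^ 21 + (1:ℂ) * zeta 31 ^ 22 + (-1:ℂ) * zeta 31 ^ 23 + (1:ℂ) * zeta 31 ^ 24 + (-1:ℂ) * zeta 31 ^ 25 + (1:ℂ) * zeta 31 ^ 26 + (-1:ℂ) * zeta 31 ^ 27 + (1:ℂ) * zeta 31 ^ 28 + (-1:ℂ) * zeta 31 ^ 29 + (1:ℂ) * zeta 31 ^ 30 = 0 := by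
    have hstep : (zeta 31 + 1) * ((1:ℂ) + (-1:ℂ) * zeta 31 ^ 1 + (1:ℂ) * zeta 31 ^ 2 + (-1:ℂ) * zeta 31 ^ 3 + (1:ℂ) * zeta 31 ^ 4 + (-1:ℂ) * zeta 31 ^ 5 + (1:ℂ) * zeta 31 ^ 6 + (-1:ℂ) * zeta 31 ^ 7 + (1:ℂ) * zeta 31 ^ 8 + (-1:ℂ) * zeta 31 ^ 9 + (1:ℂ) * zeta 31 ^ 10 + (-1:ℂ) * zeta 31 ^ 11 + (1:ℂ) * zeta 31 ^ 12 + (-1:ℂ) * zeta 31 ^ 13 + (1:ℂ) * zeta 31 ^ 14 + (-1:ℂ) * zeta 31 ^ 15 + (1:ℂ) * zeta 31 ^ 16 + (-1:ℂ) * zeta 31 ^ 17 + (1:ℂ) * zeta 31 ^ 18 + (-1:ℂ) * zeta 31 ^ 19 + (1:ℂ) * zeta 31 ^ 20 + (-1:ℂ) * zeta 31 ^ 21 + (1:ℂ) * zeta 31 ^ 22 + (-1:ℂ) * zeta 31 ^ 23 + (1:ℂ) * zeta 31 ^ 24 + (-1:ℂ) * zeta 31 ^ 25 + (1:ℂ)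 * zeta 31 ^ 26 + (-1:ℂ) * zeta 31 ^ 27 + (1:ℂ) * zeta 31 ^ 28 + (-1:ℂ) * zeta 31 ^ 29 + (1:ℂ) * zeta 31 ^ 30) = 0 := by linear_combination h31
    exact (mul_eq_zero.mp hstep).resolve_left hne
  have key : (zeta 31 ^ 28 - 1) * (zeta 31 ^ 36 - 1) * (zeta 31 ^ 40 - 1) * (zeta 31 ^ 44 - 1) * (zeta 31 ^ 48 - 1) * (zeta 31 ^ 50 - 1) * (zeta 31 ^ 52 - 1) * (zeta 31 ^ 60 - 1) * (zeta 31 ^ 64 - 1) * (zeta 31 ^ 68 - 1) = zeta 31 ^ 172 * ((zeta 31 ^ 2 - 1) * (zeta 31 ^ 2 - 1) * (zeta 31 ^ 6 - 1) * (zeta 31 ^ 10 - 1) * (zeta 31 ^ 12 - 1) * (zeta 31 ^ 14 - 1) * (zeta 31 ^ 18 - 1) * (zeta 31 ^ 22 - 1) * (zeta 31 ^ 26 - 1) * (zeta 31 ^ 34 - 1)) := by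
    linear_combination ((1:ℂ) + (1:ℂ) * zeta 31 + (-1:ℂ) * zeta 31 ^ 28 + (-1:ℂ) * zeta 31 ^ 29 + (-1:ℂ) * zeta 31 ^ 31 + (-1:ℂ) * zeta 31 ^ 32 + (-1:ℂ) * zeta 31 ^ 36 + (-1:ℂ) * zeta 31 ^ 37 + (-1:ℂ) * zeta 31 ^ 40 + (-1:ℂ) * zeta 31 ^ 41 + (-1:ℂ) * zeta 31 ^ 44 + (-1:ℂ) * zeta 31 ^ 45 + (-1:ℂ) * zeta 31 ^ 48 + (-1:ℂ) * zeta 31 ^ 49 + (-1:ℂ) * zeta 31 ^ 50 + (-1:ℂ) * zeta 31 ^ 51 + (-1:ℂ) * zeta 31 ^ 52 + (-1:ℂ) * zeta 31 ^ 53 + (1:ℂ) * zeta 31 ^ 59 + (-1:ℂ) * zeta 31 ^ 61 + (1:ℂ) * zeta 31 ^ 62 + (1:ℂ) * zeta 31 ^ 63 + (1:ℂ) * zeta 31 ^ 67 + (1:ℂ) * zeta 31 ^ 68 + (1:ℂ) * zeta 31 ^ 71 + (2:ℂ) * zeta 31 ^ 72 + (1:ℂ) * zeta 31 ^ 73 +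 (1:ℂ) * zeta 31 ^ 75 + (3:ℂ) * zeta 31 ^ 76 + (2:ℂ) * zeta 31 ^ 77 + (1:ℂ) * zeta 31 ^ 78 + (2:ℂ) * zeta 31 ^ 79 + (3:ℂ) * zeta 31 ^ 80 + (3:ℂ) * zeta 31 ^ 81 + (1:ℂ) * zeta 31 ^ 82 + (1:ℂ) * zeta 31 ^ 83 + (3:ℂ) * zeta 31 ^ 84 + (2:ℂ) * zeta 31 ^ 85 + (1:ℂ) * zeta 31 ^ 86 + (1:ℂ) * zeta 31 ^ 87 + (3:ℂ) * zeta 31 ^ 88 + (3:ℂ) * zeta 31 ^ 89 + (1:ℂ) * zeta 31 ^ 91 + (4:ℂ) * zeta 31 ^ 92 + (2:ℂ) * zeta 31 ^ 93 + (1:ℂ) * zeta 31 ^ 95 + (3:ℂ) * zeta 31 ^ 96 + (3:ℂ) * zeta 31 ^ 97 + (3:ℂ) * zeta 31 ^ 100 + (3:ℂ) * zeta 31 ^ 101 + (-1:ℂ) * zeta 31 ^ 103 + (1:ℂ) * zeta 31 ^ 104 + (2:ℂ) * zeta 31 ^ 105 + (-1:ℂ) * zeta 31 ^ 106 + (-3:ℂ)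 * zeta 31 ^ 107 + (1:ℂ) * zeta 31 ^ 109 + (-1:ℂ) * zeta 31 ^ 110 + (-2:ℂ) * zeta 31 ^ 111 + (-2:ℂ) * zeta 31 ^ 112 + (-1:ℂ) * zeta 31 ^ 114 + (-3:ℂ) * zeta 31 ^ 115 + (-2:ℂ) * zeta 31 ^ 116 + (-1:ℂ) * zeta 31 ^ 117 + (-1:ℂ) * zeta 31 ^ 118 + (-3:ℂ) * zeta 31 ^ 119 + (-5:ℂ) * zeta 31 ^ 120 + (-2:ℂ) * zeta 31 ^ 121 + (-2:ℂ) * zeta 31 ^ 122 + (-5:ℂ) * zeta 31 ^ 123 + (-4:ℂ) * zeta 31 ^ 124 + (-2:ℂ) * zeta 31 ^ 125 + (-3:ℂ) * zeta 31 ^ 126 + (-5:ℂ) * zeta 31 ^ 127 + (-7:ℂ) * zeta 31 ^ 128 + (-4:ℂ) * zeta 31 ^ 129 + (-2:ℂ) * zeta 31 ^ 130 + (-5:ℂ) * zeta 31 ^ 131 + (-7:ℂ) * zeta 31 ^ 132 + (-4:ℂ) * zeta 31 ^ 133 + (-1:ℂ) * zeta 31 ^ 134 + (-3:ℂ) * zeta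 31 ^ 135 + (-8:ℂ) * zeta 31 ^ 136 + (-5:ℂ) * zeta 31 ^ 137 + (-3:ℂ) * zeta 31 ^ 139 + (-7:ℂ) * zeta 31 ^ 140 + (-5:ℂ) * zeta 31 ^ 141 + (-1:ℂ) * zeta 31 ^ 142 + (-1:ℂ) * zeta 31 ^ 143 + (-7:ℂ) * zeta 31 ^ 144 + (-6:ℂ) * zeta 31 ^ 145 + (-1:ℂ) * zeta 31 ^ 147 + (-4:ℂ) * zeta 31 ^ 148 + (-4:ℂ) * zeta 31 ^ 149 + (2:ℂ) * zeta 31 ^ 151 + (-4:ℂ) * zeta 31 ^ 152 + (-4:ℂ) * zeta 31 ^ 153 + (3:ℂ) * zeta 31 ^ 154 + (2:ℂ) * zeta 31 ^ 155 + (-2:ℂ) * zeta 31 ^ 156 + (-1:ℂ) * zeta 31 ^ 157 + (3:ℂ) * zeta 31 ^ 158 + (5:ℂ) * zeta 31 ^ 159 + (-2:ℂ) * zeta 31 ^ 161 + (4:ℂ) * zeta 31 ^ 162 + (6:ℂ) * zeta 31 ^ 163 + (3:ℂ) * zeta 31 ^ 164 + (3:ℂ) * zeta 31 ^ 166 + (8:ℂ)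 * zeta 31 ^ 167 + (5:ℂ) * zeta 31 ^ 168 + (5:ℂ) * zeta 31 ^ 170 + (9:ℂ) * zeta 31 ^ 171 + (7:ℂ) * zeta 31 ^ 172 + (3:ℂ) * zeta 31 ^ 173 + (5:ℂ) * zeta 31 ^ 174 + (11:ℂ) * zeta 31 ^ 175 + (8:ℂ) * zeta 31 ^ 176 + (2:ℂ) * zeta 31 ^ 177 + (6:ℂ) * zeta 31 ^ 178 + (9:ℂ) * zeta 31 ^ 179 + (8:ℂ) * zeta 31 ^ 180 + (4:ℂ) * zeta 31 ^ 181 + (4:ℂ) * zeta 31 ^ 182 + (10:ℂ) * zeta 31 ^ 183 + (10:ℂ) * zeta 31 ^ 184 + (3:ℂ) * zeta 31 ^ 185 + (4:ℂ) * zeta 31 ^ 186 + (8:ℂ) * zeta 31 ^ 187 + (8:ℂ) * zeta 31 ^ 188 + (4:ℂ) * zeta 31 ^ 189 + (4:ℂ) * zeta 31 ^ 190 + (9:ℂ) * zeta 31 ^ 191 + (8:ℂ) * zeta 31 ^ 192 + (2:ℂ) * zeta 31 ^ 193 + (3:ℂ) * zeta 31 ^ 194 + (6:ℂ) * zeta 31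 ^ 195 + (6:ℂ) * zeta 31 ^ 196 + (3:ℂ) * zeta 31 ^ 197 + (1:ℂ) * zeta 31 ^ 198 + (4:ℂ) * zeta 31 ^ 199 + (5:ℂ) * zeta 31 ^ 200 + (-1:ℂ) * zeta 31 ^ 202 + (1:ℂ) * zeta 31 ^ 203 + (2:ℂ) * zeta 31 ^ 204 + (-2:ℂ) * zeta 31 ^ 206 + (1:ℂ) * zeta 31 ^ 207 + (-4:ℂ) * zeta 31 ^ 209 + (-3:ℂ) * zeta 31 ^ 210 + (-2:ℂ) * zeta 31 ^ 211 + (-3:ℂ) * zeta 31 ^ 212 + (-3:ℂ) * zeta 31 ^ 213 + (-4:ℂ) * zeta 31 ^ 214 + (-4:ℂ) * zeta 31 ^ 215 + (-5:ℂ) * zeta 31 ^ 216 + (-6:ℂ) * zeta 31 ^ 217 + (-7:ℂ) * zeta 31 ^ 218 + (-7:ℂ) * zeta 31 ^ 219 + (-6:ℂ) * zeta 31 ^ 220 + (-6:ℂ) * zeta 31 ^ 221 + (-7:ℂ) * zeta 31 ^ 222 + (-6:ℂ) * zeta 31 ^ 223 + (-8:ℂ) * zeta 31 ^ 224 + (-9:ℂ)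 * zeta 31 ^ 225 + (-8:ℂ) * zeta 31 ^ 226 + (-8:ℂ) * zeta 31 ^ 227 + (-9:ℂ) * zeta 31 ^ 228 + (-7:ℂ) * zeta 31 ^ 229 + (-6:ℂ) * zeta 31 ^ 230 + (-7:ℂ) * zeta 31 ^ 231 + (-9:ℂ) * zeta 31 ^ 232 + (-8:ℂ) * zeta 31 ^ 233 + (-8:ℂ) * zeta 31 ^ 234 + (-9:ℂ) * zeta 31 ^ 235 + (-8:ℂ) * zeta 31 ^ 236 + (-6:ℂ) * zeta 31 ^ 237 + (-7:ℂ) * zeta 31 ^ 238 + (-6:ℂ) * zeta 31 ^ 239 + (-6:ℂ) * zeta 31 ^ 240 + (-7:ℂ) * zeta 31 ^ 241 + (-7:ℂ) * zeta 31 ^ 242 + (-6:ℂ) * zeta 31 ^ 243 + (-5:ℂ) * zeta 31 ^ 244 + (-4:ℂ) * zeta 31 ^ 245 + (-4:ℂ) * zeta 31 ^ 246 + (-3:ℂ) * zeta 31 ^ 247 + (-3:ℂ) * zeta 31 ^ 248 + (-2:ℂ) * zeta 31 ^ 249 + (-3:ℂ) * zeta 31 ^ 250 + (-4:ℂ) *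 zeta 31 ^ 251 + (1:ℂ) * zeta 31 ^ 253 + (-2:ℂ) * zeta 31 ^ 254 + (2:ℂ) * zeta 31 ^ 256 + (1:ℂ) * zeta 31 ^ 257 + (-1:ℂ) * zeta 31 ^ 258 + (5:ℂ) * zeta 31 ^ 260 + (4:ℂ) * zeta 31 ^ 261 + (1:ℂ) * zeta 31 ^ 262 + (3:ℂ) * zeta 31 ^ 263 + (6:ℂ) * zeta 31 ^ 264 + (6:ℂ) * zeta 31 ^ 265 + (3:ℂ) * zeta 31 ^ 266 + (2:ℂ) * zeta 31 ^ 267 + (8:ℂ) * zeta 31 ^ 268 + (9:ℂ) * zeta 31 ^ 269 + (4:ℂ) * zeta 31 ^ 270 + (4:ℂ) * zeta 31 ^ 271 + (8:ℂ) * zeta 31 ^ 272 + (8:ℂ) * zeta 31 ^ 273 + (4:ℂ) * zeta 31 ^ 274 + (3:ℂ) * zeta 31 ^ 275 + (10:ℂ) * zeta 31 ^ 276 + (10:ℂ) * zeta 31 ^ 277 + (4:ℂ) * zeta 31 ^ 278 + (4:ℂ) * zeta 31 ^ 279 + (8:ℂ) * zeta 31 ^ 280 + (9:ℂ) * zeta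 31 ^ 281 + (6:ℂ) * zeta 31 ^ 282 + (2:ℂ) * zeta 31 ^ 283 + (8:ℂ) * zeta 31 ^ 284 + (11:ℂ) * zeta 31 ^ 285 + (5:ℂ) * zeta 31 ^ 286 + (3:ℂ) * zeta 31 ^ 287 + (7:ℂ) * zeta 31 ^ 288 + (9:ℂ) * zeta 31 ^ 289 + (5:ℂ) * zeta 31 ^ 290 + (5:ℂ) * zeta 31 ^ 292 + (8:ℂ) * zeta 31 ^ 293 + (3:ℂ) * zeta 31 ^ 294 + (3:ℂ) * zeta 31 ^ 296 + (6:ℂ) * zeta 31 ^ 297 + (4:ℂ) * zeta 31 ^ 298 + (-2:ℂ) * zeta 31 ^ 299 + (5:ℂ) * zeta 31 ^ 301 + (3:ℂ) * zeta 31 ^ 302 + (-1:ℂ) * zeta 31 ^ 303 + (-2:ℂ) * zeta 31 ^ 304 + (2:ℂ) * zeta 31 ^ 305 + (3:ℂ) * zeta 31 ^ 306 + (-4:ℂ) * zeta 31 ^ 307 + (-4:ℂ) * zeta 31 ^ 308 + (2:ℂ) * zeta 31 ^ 309 + (-4:ℂ) * zeta 31 ^ 311 + (-4:ℂ) * zeta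 31 ^ 312 + (-1:ℂ) * zeta 31 ^ 313 + (-6:ℂ) * zeta 31 ^ 315 + (-7:ℂ) * zeta 31 ^ 316 + (-1:ℂ) * zeta 31 ^ 317 + (-1:ℂ) * zeta 31 ^ 318 + (-5:ℂ) * zeta 31 ^ 319 + (-7:ℂ) * zeta 31 ^ 320 + (-3:ℂ) * zeta 31 ^ 321 + (-5:ℂ) * zeta 31 ^ 323 + (-8:ℂ) * zeta 31 ^ 324 + (-3:ℂ) * zeta 31 ^ 325 + (-1:ℂ) * zeta 31 ^ 326 + (-4:ℂ) * zeta 31 ^ 327 + (-7:ℂ) * zeta 31 ^ 328 + (-5:ℂ) * zeta 31 ^ 329 + (-2:ℂ) * zeta 31 ^ 330 + (-4:ℂ) * zeta 31 ^ 331 + (-7:ℂ) * zeta 31 ^ 332 + (-5:ℂ) * zeta 31 ^ 333 + (-3:ℂ) * zeta 31 ^ 334 + (-2:ℂ) * zeta 31 ^ 335 + (-4:ℂ) * zeta 31 ^ 336 + (-5:ℂ) * zeta 31 ^ 337 + (-2:ℂ) * zeta 31 ^ 338 + (-2:ℂ) * zeta 31 ^ 339 + (-5:ℂ) * zeta 31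 ^ 340 + (-3:ℂ) * zeta 31 ^ 341 + (-1:ℂ) * zeta 31 ^ 342 + (-1:ℂ) * zeta 31 ^ 343 + (-2:ℂ) * zeta 31 ^ 344 + (-3:ℂ) * zeta 31 ^ 345 + (-1:ℂ) * zeta 31 ^ 346 + (-2:ℂ) * zeta 31 ^ 348 + (-2:ℂ) * zeta 31 ^ 349 + (-1:ℂ) * zeta 31 ^ 350 + (1:ℂ) * zeta 31 ^ 351 + (-3:ℂ) * zeta 31 ^ 353 + (-1:ℂ) * zeta 31 ^ 354 + (2:ℂ) * zeta 31 ^ 355 + (1:ℂ) * zeta 31 ^ 356 + (-1:ℂ) * zeta 31 ^ 357 + (3:ℂ) * zeta 31 ^ 359 + (3:ℂ) * zeta 31 ^ 360 + (3:ℂ) * zeta 31 ^ 363 + (3:ℂ) * zeta 31 ^ 364 + (1:ℂ) * zeta 31 ^ 365 + (2:ℂ) * zeta 31 ^ 367 + (4:ℂ) * zeta 31 ^ 368 + (1:ℂ) * zeta 31 ^ 369 + (3:ℂ) * zeta 31 ^ 371 + (3:ℂ) * zeta 31 ^ 372 + (1:ℂ) * zeta 31 ^ 373 + (1:ℂ)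 * zeta 31 ^ 374 + (2:ℂ) * zeta 31 ^ 375 + (3:ℂ) * zeta 31 ^ 376 + (1:ℂ) * zeta 31 ^ 377 + (1:ℂ) * zeta 31 ^ 378 + (3:ℂ) * zeta 31 ^ 379 + (3:ℂ) * zeta 31 ^ 380 + (2:ℂ) * zeta 31 ^ 381 + (1:ℂ) * zeta 31 ^ 382 + (2:ℂ) * zeta 31 ^ 383 + (3:ℂ) * zeta 31 ^ 384 + (1:ℂ) * zeta 31 ^ 385 + (1:ℂ) * zeta 31 ^ 387 + (2:ℂ) * zeta 31 ^ 388 + (1:ℂ) * zeta 31 ^ 389 + (1:ℂ) * zeta 31 ^ 392 + (1:ℂ) * zeta 31 ^ 393 + (1:ℂ) * zeta 31 ^ 397 + (1:ℂ) * zeta 31 ^ 398 + (-1:ℂ) * zeta 31 ^ 399 + (1:ℂ) * zeta 31 ^ 401 + (-1:ℂ) * zeta 31 ^ 407 + (-1:ℂ) * zeta 31 ^ 408 + (-1:ℂ) * zeta 31 ^ 409 + (-1:ℂ) * zeta 31 ^ 410 + (-1:ℂ) * zeta 31 ^ 411 + (-1:ℂ) * zeta 31 ^ 412 + (-1:ℂ)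 * zeta 31 ^ 415 + (-1:ℂ) * zeta 31 ^ 416 + (-1:ℂ) * zeta 31 ^ 419 + (-1:ℂ) * zeta 31 ^ 420 + (-1:ℂ) * zeta 31 ^ 423 + (-1:ℂ) * zeta 31 ^ 424 + (-1:ℂ) * zeta 31 ^ 428 + (-1:ℂ) * zeta 31 ^ 429 + (-1:ℂ) * zeta 31 ^ 431 + (-1:ℂ) * zeta 31 ^ 432 + (1:ℂ) * zeta 31 ^ 459 + (1:ℂ) * zeta 31 ^ 460) * hPhi
  have e1 : qint 31 1 * ((zeta 31 - (zeta 31)⁻¹) * zeta 31 ^ 1) = zeta 31 ^ 2 - 1 := by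
    have h1 : zeta 31 ^ 1 * (zeta 31 ^ 1)⁻¹ = 1 := mul_inv_cancel₀ (pow_ne_zero _ hz0)
    unfold qint
    rw [zpow_neg, show ((1:ℤ)) = ((1:ℕ):ℤ) by norm_num, zpow_natCast,
      div_mul_eq_mul_div, div_eq_iff hd]
    linear_combination ((zeta 31)⁻¹ - zeta 31) * h1
  have e3 : qint 31 3 * ((zeta 31 - (zeta 31)⁻¹) * zeta 31 ^ 3) = zeta 31 ^ 6 - 1 := by
    have h1 : zeta 31 ^ 3 * (zeta 31 ^ 3)⁻¹ = 1 := mul_inv_cancel₀ (pow_ne_zero _ hz0)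
    unfold qint
    rw [zpow_neg, show ((3:ℤ)) = ((3:ℕ):ℤ) by norm_num, zpow_natCast,
      div_mul_eq_mul_div, div_eq_iff hd]
    linear_combination ((zeta 31)⁻¹ - zeta 31) * h1
  have e5 : qint 31 5 * ((zeta 31 - (zeta 31)⁻¹) * zeta 31 ^ 5) = zeta 31 ^ 10 - 1 := by
    have h1 : zeta 31 ^ 5 * (zeta 31 ^ 5)⁻¹ = 1 := mul_inv_cancel₀ (pow_ne_zero _ hz0)
    unfold qint
    rw [zpow_neg, show ((5:ℤ)) = ((5:ℕ):ℤ) by norm_num, zpow_natCast,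
      div_mul_eq_mul_div, div_eq_iff hd]
    linear_combination ((zeta 31)⁻¹ - zeta 31) * h1
  have e6 : qint 31 6 * ((zeta 31 - (zeta 31)⁻¹) * zeta 31 ^ 6) = zeta 31 ^ 12 - 1 := by
    have h1 : zeta 31 ^ 6 * (zeta 31 ^ 6)⁻¹ = 1 := mul_inv_cancel₀ (pow_ne_zero _ hz0)
    unfold qint
    rw [zpow_neg, show ((6:ℤ)) = ((6:ℕ):ℤ) by norm_num, zpow_natCast,
      div_mul_eq_mul_div, div_eq_iff hd]
    linear_combination ((zeta 31)⁻¹ - zeta 31) * h1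
  have e7 : qint 31 7 * ((zeta 31 - (zeta 31)⁻¹) * zeta 31 ^ 7) = zeta 31 ^ 14 - 1 := by
    have h1 : zeta 31 ^ 7 * (zeta 31 ^ 7)⁻¹ = 1 := mul_inv_cancel₀ (pow_ne_zero _ hz0)
    unfold qint
    rw [zpow_neg, show ((7:ℤ)) = ((7:ℕ):ℤ) by norm_num, zpow_natCast,
      div_mul_eq_mul_div, div_eq_iff hd]
    linear_combination ((zeta 31)⁻¹ - zeta 31) * h1
  have e9 : qint 31 9 * ((zeta 31 - (zeta 31)⁻¹) * zeta 31 ^ 9) = zeta 31 ^ 18 - 1 := by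
    have h1 : zeta 31 ^ 9 * (zeta 31 ^ 9)⁻¹ = 1 := mul_inv_cancel₀ (pow_ne_zero _ hz0)
    unfold qint
    rw [zpow_neg, show ((9:ℤ)) = ((9:ℕ):ℤ) by norm_num, zpow_natCast,
      div_mul_eq_mul_div, div_eq_iff hd]
    linear_combination ((zeta 31)⁻¹ - zeta 31) * h1
  have e11 : qint 31 11 * ((zeta 31 - (zeta 31)⁻¹) * zeta 31 ^ 11) = zeta 31 ^ 22 - 1 := by
    have h1 : zeta 31 ^ 11 * (zeta 31 ^ 11)⁻¹ = 1 := mul_inv_cancel₀ (pow_ne_zero _ hz0)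
    unfold qint
    rw [zpow_neg, show ((11:ℤ)) = ((11:ℕ):ℤ) by norm_num, zpow_natCast,
      div_mul_eq_mul_div, div_eq_iff hd]
    linear_combination ((zeta 31)⁻¹ - zeta 31) * h1
  have e13 : qint 31 13 * ((zeta 31 - (zeta 31)⁻¹) * zeta 31 ^ 13) = zeta 31 ^ 26 - 1 := by
    have h1 : zeta 31 ^ 13 * (zeta 31 ^ 13)⁻¹ = 1 := mul_inv_cancel₀ (pow_ne_zero _ hz0)
    unfold qint
    rw [zpow_neg, show ((13:ℤ)) = ((13:ℕ):ℤ) by norm_num, zpow_natCast,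
      div_mul_eq_mul_div, div_eq_iff hd]
    linear_combination ((zeta 31)⁻¹ - zeta 31) * h1
  have e14 : qint 31 14 * ((zeta 31 - (zeta 31)⁻¹) * zeta 31 ^ 14) = zeta 31 ^ 28 - 1 := by
    have h1 : zeta 31 ^ 14 * (zeta 31 ^ 14)⁻¹ = 1 := mul_inv_cancel₀ (pow_ne_zero _ hz0)
    unfold qint
    rw [zpow_neg, show ((14:ℤ)) = ((14:ℕ):ℤ) by norm_num, zpow_natCast,
      div_mul_eq_mul_div, div_eq_iff hd]
    linear_combination ((zeta 31)⁻¹ - zeta 31) * h1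
  have e17 : qint 31 17 * ((zeta 31 - (zeta 31)⁻¹) * zeta 31 ^ 17) = zeta 31 ^ 34 - 1 := by
    have h1 : zeta 31 ^ 17 * (zeta 31 ^ 17)⁻¹ = 1 := mul_inv_cancel₀ (pow_ne_zero _ hz0)
    unfold qint
    rw [zpow_neg, show ((17:ℤ)) = ((17:ℕ):ℤ) by norm_num, zpow_natCast,
      div_mul_eq_mul_div, div_eq_iff hd]
    linear_combination ((zeta 31)⁻¹ - zeta 31) * h1
  have e18 : qint 31 18 * ((zeta 31 - (zeta 31)⁻¹) * zeta 31 ^ 18) = zeta 31 ^ 36 - 1 := by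
    have h1 : zeta 31 ^ 18 * (zeta 31 ^ 18)⁻¹ = 1 := mul_inv_cancel₀ (pow_ne_zero _ hz0)
    unfold qint
    rw [zpow_neg, show ((18:ℤ)) = ((18:ℕ):ℤ) by norm_num, zpow_natCast,
      div_mul_eq_mul_div, div_eq_iff hd]
    linear_combination ((zeta 31)⁻¹ - zeta 31) * h1
  have e20 : qint 31 20 * ((zeta 31 - (zeta 31)⁻¹) * zeta 31 ^ 20) = zeta 31 ^ 40 - 1 := by
    have h1 : zeta 31 ^ 20 * (zeta 31 ^ 20)⁻¹ = 1 := mul_inv_cancel₀ (pow_ne_zero _ hz0)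
    unfold qint
    rw [zpow_neg, show ((20:ℤ)) = ((20:ℕ):ℤ) by norm_num, zpow_natCast,
      div_mul_eq_mul_div, div_eq_iff hd]
    linear_combination ((zeta 31)⁻¹ - zeta 31) * h1
  have e22 : qint 31 22 * ((zeta 31 - (zeta 31)⁻¹) * zeta 31 ^ 22) = zeta 31 ^ 44 - 1 := by
    have h1 : zeta 31 ^ 22 * (zeta 31 ^ 22)⁻¹ = 1 := mul_inv_cancel₀ (pow_ne_zero _ hz0)
    unfold qint
    rw [zpow_neg, show ((22:ℤ)) = ((22:ℕ):ℤ) by norm_num, zpow_natCast,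
      div_mul_eq_mul_div, div_eq_iff hd]
    linear_combination ((zeta 31)⁻¹ - zeta 31) * h1
  have e24 : qint 31 24 * ((zeta 31 - (zeta 31)⁻¹) * zeta 31 ^ 24) = zeta 31 ^ 48 - 1 := by
    have h1 : zeta 31 ^ 24 * (zeta 31 ^ 24)⁻¹ = 1 := mul_inv_cancel₀ (pow_ne_zero _ hz0)
    unfold qint
    rw [zpow_neg, show ((24:ℤ)) = ((24:ℕ):ℤ) by norm_num, zpow_natCast,
      div_mul_eq_mul_div, div_eq_iff hd]
    linear_combination ((zeta 31)⁻¹ - zeta 31) * h1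
  have e25 : qint 31 25 * ((zeta 31 - (zeta 31)⁻¹) * zeta 31 ^ 25) = zeta 31 ^ 50 - 1 := by
    have h1 : zeta 31 ^ 25 * (zeta 31 ^ 25)⁻¹ = 1 := mul_inv_cancel₀ (pow_ne_zero _ hz0)
    unfold qint
    rw [zpow_neg, show ((25:ℤ)) = ((25:ℕ):ℤ) by norm_num, zpow_natCast,
      div_mul_eq_mul_div, div_eq_iff hd]
    linear_combination ((zeta 31)⁻¹ - zeta 31) * h1
  have e26 : qint 31 26 * ((zeta 31 - (zeta 31)⁻¹) * zeta 31 ^ 26) = zeta 31 ^ 52 - 1 := by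
    have h1 : zeta 31 ^ 26 * (zeta 31 ^ 26)⁻¹ = 1 := mul_inv_cancel₀ (pow_ne_zero _ hz0)
    unfold qint
    rw [zpow_neg, show ((26:ℤ)) = ((26:ℕ):ℤ) by norm_num, zpow_natCast,
      div_mul_eq_mul_div, div_eq_iff hd]
    linear_combination ((zeta 31)⁻¹ - zeta 31) * h1
  have e30 : qint 31 30 * ((zeta 31 - (zeta 31)⁻¹) * zeta 31 ^ 30) = zeta 31 ^ 60 - 1 := by
    have h1 : zeta 31 ^ 30 * (zeta 31 ^ 30)⁻¹ = 1 := mul_inv_cancel₀ (pow_ne_zero _ hz0)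
    unfold qint
    rw [zpow_neg, show ((30:ℤ)) = ((30:ℕ):ℤ) by norm_num, zpow_natCast,
      div_mul_eq_mul_div, div_eq_iff hd]
    linear_combination ((zeta 31)⁻¹ - zeta 31) * h1
  have e32 : qint 31 32 * ((zeta 31 - (zeta 31)⁻¹) * zeta 31 ^ 32) = zeta 31 ^ 64 - 1 := by
    have h1 : zeta 31 ^ 32 * (zeta 31 ^ 32)⁻¹ = 1 := mul_inv_cancel₀ (pow_ne_zero _ hz0)
    unfold qint
    rw [zpow_neg, show ((32:ℤ)) = ((32:ℕ):ℤ) by norm_num, zpow_natCast,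
      div_mul_eq_mul_div, div_eq_iff hd]
    linear_combination ((zeta 31)⁻¹ - zeta 31) * h1
  have e34 : qint 31 34 * ((zeta 31 - (zeta 31)⁻¹) * zeta 31 ^ 34) = zeta 31 ^ 68 - 1 := by
    have h1 : zeta 31 ^ 34 * (zeta 31 ^ 34)⁻¹ = 1 := mul_inv_cancel₀ (pow_ne_zero _ hz0)
    unfold qint
    rw [zpow_neg, show ((34:ℤ)) = ((34:ℕ):ℤ) by norm_num, zpow_natCast,
      div_mul_eq_mul_div, div_eq_iff hd]
    linear_combination ((zeta 31)⁻¹ - zeta 31) * h1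
  have hz2 : ∀ k : ℕ, 0 < k → k < 62 → zeta 31 ^ k - 1 ≠ 0 := fun k hk1 hk2 =>
    sub_ne_zero_of_ne (hz.pow_ne_one_of_pos_of_lt hk1.ne' hk2)
  have hq1 : qint 31 1 ≠ 0 := by
    intro h
    exact hz2 2 (by norm_num) (by norm_num) (by rw [← e1, h, zero_mul])
  have hq3 : qint 31 3 ≠ 0 := by
    intro h
    exact hz2 6 (by norm_num) (by norm_num) (by rw [← e3, h, zero_mul])
  have hq5 : qint 31 5 ≠ 0 := by
    intro h
    exact hz2 10 (by norm_num) (by norm_num) (by rw [← e5, h, zero_mul])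
  have hq6 : qint 31 6 ≠ 0 := by
    intro h
    exact hz2 12 (by norm_num) (by norm_num) (by rw [← e6, h, zero_mul])
  have hq7 : qint 31 7 ≠ 0 := by
    intro h
    exact hz2 14 (by norm_num) (by norm_num) (by rw [← e7, h, zero_mul])
  have hq9 : qint 31 9 ≠ 0 := by
    intro h
    exact hz2 18 (by norm_num) (by norm_num) (by rw [← e9, h, zero_mul])
  have hq11 : qint 31 11 ≠ 0 := by
    intro h
    exact hz2 22 (by norm_num) (by norm_num) (by rw [← e11, h, zero_mul])
  have hq13 : qint 31 13 ≠ 0 := by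
    intro h
    exact hz2 26 (by norm_num) (by norm_num) (by rw [← e13, h, zero_mul])
  have hq17 : qint 31 17 ≠ 0 := by
    intro h
    exact hz2 34 (by norm_num) (by norm_num) (by rw [← e17, h, zero_mul])
  have main : qint 31 14 * qint 31 18 * qint 31 20 * qint 31 22 * qint 31 24 * qint 31 25 *
        qint 31 26 * qint 31 30 * qint 31 32 * qint 31 34 =
      qint 31 1 ^ 2 * qint 31 3 * qint 31 5 * qint 31 6 * qint 31 7 * qint 31 9 *
          qint 31 11 * qint 31 13 * qint 31 17 := by
    have hM : (zeta 31 - (zeta 31)⁻¹) ^ 10 * zeta 31 ^ 245 ≠ 0 :=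
      mul_ne_zero (pow_ne_zero _ hd) (pow_ne_zero _ hz0)
    apply mul_right_cancel₀ hM
    calc (qint 31 14 * qint 31 18 * qint 31 20 * qint 31 22 * qint 31 24 * qint 31 25 *
        qint 31 26 * qint 31 30 * qint 31 32 * qint 31 34) * ((zeta 31 - (zeta 31)⁻¹) ^ 10 * zeta 31 ^ 245)
        = (qint 31 14 * ((zeta 31 - (zeta 31)⁻¹) * zeta 31 ^ 14)) * (qint 31 18 * ((zeta 31 - (zeta 31)⁻¹) * zeta 31 ^ 18)) * (qint 31 20 * ((zeta 31 - (zeta 31)⁻¹) * zeta 31 ^ 20)) * (qint 31 22 * ((zeta 31 - (zeta 31)⁻¹) * zeta 31 ^ 22)) * (qint 31 24 * ((zeta 31 - (zeta 31)⁻¹) * zeta 31 ^ 24)) * (qint 31 25 * ((zeta 31 - (zeta 31)⁻¹) * zeta 31 ^ 25)) * (qint 31 26 * ((zeta 31 - (zeta 31)⁻¹) * zeta 31 ^ 26)) * (qint 31 30 * ((zeta 31 - (zeta 31)⁻¹) * zeta 31 ^ 30)) * (qint 31 32 * ((zeta 31 - (zeta 31)⁻¹) * zeta 31 ^ 32)) *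 (qint 31 34 * ((zeta 31 - (zeta 31)⁻¹) * zeta 31 ^ 34)) := by ring
      _ = (zeta 31 ^ 28 - 1) * (zeta 31 ^ 36 - 1) * (zeta 31 ^ 40 - 1) * (zeta 31 ^ 44 - 1) * (zeta 31 ^ 48 - 1) * (zeta 31 ^ 50 - 1) * (zeta 31 ^ 52 - 1) * (zeta 31 ^ 60 - 1) * (zeta 31 ^ 64 - 1) * (zeta 31 ^ 68 - 1) := by rw [e14, e18, e20, e22, e24, e25, e26, e30, e32, e34]
      _ = zeta 31 ^ 172 * ((zeta 31 ^ 2 - 1) * (zeta 31 ^ 2 - 1) * (zeta 31 ^ 6 - 1) * (zeta 31 ^ 10 - 1) * (zeta 31 ^ 12 - 1) * (zeta 31 ^ 14 - 1) * (zeta 31 ^ 18 - 1) * (zeta 31 ^ 22 - 1) * (zeta 31 ^ 26 - 1) * (zeta 31 ^ 34 - 1)) := key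
      _ = zeta 31 ^ 172 * ((qint 31 1 * ((zeta 31 - (zeta 31)⁻¹) * zeta 31 ^ 1)) * (qint 31 1 * ((zeta 31 - (zeta 31)⁻¹) * zeta 31 ^ 1)) * (qint 31 3 * ((zeta 31 - (zeta 31)⁻¹) * zeta 31 ^ 3)) * (qint 31 5 * ((zeta 31 - (zeta 31)⁻¹) * zeta 31 ^ 5)) * (qint 31 6 * ((zeta 31 - (zeta 31)⁻¹) * zeta 31 ^ 6)) * (qint 31 7 * ((zeta 31 - (zeta 31)⁻¹) * zeta 31 ^ 7)) * (qint 31 9 * ((zeta 31 - (zeta 31)⁻¹) * zeta 31 ^ 9)) * (qint 31 11 * ((zeta 31 - (zeta 31)⁻¹) * zeta 31 ^ 11)) * (qint 31 13 * ((zeta 31 - (zeta 31)⁻¹) * zeta 31 ^ 13)) * (qint 31 17 * ((zeta 31 - (zeta 31)⁻¹) * zeta 31 ^ 17))) := by rw [e1, e3, e5, e6, e7, e9, e11, e13, e17]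
      _ = (qint 31 1 ^ 2 * qint 31 3 * qint 31 5 * qint 31 6 * qint 31 7 * qint 31 9 *
          qint 31 11 * qint 31 13 * qint 31 17) * ((zeta 31 - (zeta 31)⁻¹) ^ 10 * zeta 31 ^ 245) := by ring
  refine ⟨main, ?_⟩
  rw [main]
  exact div_self (mul_ne_zero (mul_ne_zero (mul_ne_zero (mul_ne_zero (mul_ne_zero (mul_ne_zero (mul_ne_zero (mul_ne_zero (pow_ne_zero 2 hq1) hq3) hq5) hq6) hq7) hq9) hq11) hq13) hq17)
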